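/- Let c be an even nonnegative cost function and q a probability density on ℝ. Define the symmetrized density q̃(x) := (q(x)+q(−x))/2. Then ∫ c(x) q̃(x) dx = ∫ c(x) q(x) dx, and for every s>0, sup_{|a|≤s} D(q̃ ‖ T_a q̃) ≤ sup_{|a|≤s} D(q ‖ T_a q). -/

import Mathlib

open MeasureTheory Filter Real Set
open scoped ENNReal NNReal Classical

noncomputable section

/-- Shift operator on Borel measures: `(shiftMeasure a μ) B = μ (B - a)`. -/
def shiftMeasure (a : ℝ) (μ : Measure ℝ) : Measure ℝ := μ.map (· + a)

/-- Kullback–Leibler divergence between Borel measures on `ℝ`. -/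
def KLdiv (μ ν : Measure ℝ) : ℝ≥0∞ :=
  if μ ≪ ν ∧ Integrable (llr μ ν) μ then ENNReal.ofReal (∫ x, llr μ ν x ∂μ) else ⊤

/-- Standing assumptions on the cost function. -/
structure IsCostFun (c : ℝ → ℝ) (α β : ℝ) : Prop where
  nonneg : ∀ x, 0 ≤ c x
  zero : c 0 = 0
  even : ∀ x, c (-x) = c x
  mono : ∀ x y : ℝ, |x| ≤ |y| → c x ≤ c y
  continuous : Continuous c
  tail : Tendsto (fun x : ℝ => c x / (β * x ^ α)) atTop (nhds 1)


/-- The Borel measure on `ℝ` with density `f` with respect to Lebesgue measure. -/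
def mOf (f : ℝ → ℝ) : Measure ℝ := volume.withDensity fun x => ENNReal.ofReal (f x)

/-! ### Auxiliary real inequalities -/

lemma logsum_term {P R p r : ℝ} (hP : 0 < P) (hR : 0 < R) (hp : 0 ≤ p) (hr : 0 ≤ r)
    (h : r = 0 → p = 0) :
    Real.log (P / R) * p ≤ Real.log (p / r) * p + P / R * r - p := by
  rcases eq_or_lt_of_le hp with hp0 | hp0
  · rw [← hp0]
    simp only [mul_zero, zero_add, sub_zero]
    positivity
  · rcases eq_or_lt_of_le hr with hr0 | hr0
    · exact absurd (h hr0.symm) hp0.ne'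
    have hx : 0 < P / R / (p / r) := by positivity
    have hlog := Real.log_le_sub_one_of_pos hx
    rw [Real.log_div (by positivity : (0:ℝ) < P / R).ne' (by positivity : (0:ℝ) < p / r).ne']
      at hlog
    have h4 : (Real.log (P / R) - Real.log (p / r)) * p ≤ (P / R / (p / r) - 1) * p :=
      mul_le_mul_of_nonneg_right hlog hp0.le
    have h2 : P / R / (p / r) * p = P / R * r := by
      field_simp
    rw [sub_mul, sub_mul, one_mul, h2] at h4
    linarith

lemma logsum {p₁ p₂ r₁ r₂ : ℝ} (hp₁ : 0 ≤ p₁) (hp₂ : 0 ≤ p₂) (hr₁ : 0 ≤ r₁) (hr₂ : 0 ≤ r₂)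
    (h₁ : r₁ = 0 → p₁ = 0) (h₂ : r₂ = 0 → p₂ = 0) :
    Real.log ((p₁ + p₂) / 2 / ((r₁ + r₂) / 2)) * ((p₁ + p₂) / 2)
      ≤ (Real.log (p₁ / r₁) * p₁ + Real.log (p₂ / r₂) * p₂) / 2 := by
  have hdd : (p₁ + p₂) / 2 / ((r₁ + r₂) / 2) = (p₁ + p₂) / (r₁ + r₂) := by
    rw [div_div_div_comm]
    simp
  rw [hdd]
  rcases eq_or_lt_of_le (add_nonneg hr₁ hr₂) with hR | hR
  · have e1 : r₁ = 0 := by linarith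
    have e2 : r₂ = 0 := by linarith
    simp [h₁ e1, h₂ e2]
  rcases eq_or_lt_of_le (add_nonneg hp₁ hp₂) with hP | hP
  · have e1 : p₁ = 0 := by linarith
    have e2 : p₂ = 0 := by linarith
    simp [e1, e2]
  have t₁ := logsum_term hP hR hp₁ hr₁ h₁
  have t₂ := logsum_term hP hR hp₂ hr₂ h₂
  have hRR : (p₁ + p₂) / (r₁ + r₂) * r₁ + (p₁ + p₂) / (r₁ + r₂) * r₂ = p₁ + p₂ := by
    rw [← mul_add]
    exact div_mul_cancel₀ _ hR.ne'
  have hL : Real.log ((p₁ + p₂) / (r₁ + r₂)) * (p₁ + p₂)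
      = Real.log ((p₁ + p₂) / (r₁ + r₂)) * p₁ + Real.log ((p₁ + p₂) / (r₁ + r₂)) * p₂ :=
    mul_add _ _ _
  have hsum : Real.log ((p₁ + p₂) / (r₁ + r₂)) * (p₁ + p₂)
      ≤ Real.log (p₁ / r₁) * p₁ + Real.log (p₂ / r₂) * p₂ := by
    rw [hL]; linarith
  have hhalf : Real.log ((p₁ + p₂) / (r₁ + r₂)) * ((p₁ + p₂) / 2)
      = Real.log ((p₁ + p₂) / (r₁ + r₂)) * (p₁ + p₂) / 2 := by ring
  rw [hhalf]
  linarith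

lemma log_mul_lb {p r : ℝ} (hp : 0 ≤ p) (hr : 0 ≤ r) (h : r = 0 → p = 0) :
    -r ≤ Real.log (p / r) * p := by
  rcases eq_or_lt_of_le hp with hp0 | hp0
  · rw [← hp0, mul_zero]
    linarith
  rcases eq_or_lt_of_le hr with hr0 | hr0
  · exact absurd (h hr0.symm) hp0.ne'
  have hlog := Real.log_le_sub_one_of_pos (show (0:ℝ) < r / p by positivity)
  have hneg : Real.log (p / r) = -Real.log (r / p) := by
    rw [← Real.log_inv, inv_div]
  have h4 : Real.log (r / p) * p ≤ (r / p - 1) * p := mul_le_mul_of_nonneg_right hlog hp0.le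
  have h5 : (r / p - 1) * p = r - p := by field_simp
  rw [h5] at h4
  rw [hneg]
  nlinarith

/-! ### Measure-theoretic helpers -/

lemma mOf_congr {f g : ℝ → ℝ} (h : f = g) : mOf f = mOf g := by rw [h]

lemma lintegral_comp_neg' (F : ℝ → ℝ≥0∞) : ∫⁻ x, F (-x) = ∫⁻ x, F x := by
  conv_rhs => rw [← Measure.map_neg_eq_self (volume : Measure ℝ)]
  exact (lintegral_map_equiv F (MeasurableEquiv.neg ℝ)).symm

lemma ae_comp_neg' {Φ : ℝ → Prop} (hΦ : MeasurableSet {x | Φ x}) :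
    (∀ᵐ x, Φ (-x)) ↔ ∀ᵐ x, Φ x := by
  conv_rhs => rw [← Measure.map_neg_eq_self (volume : Measure ℝ)]
  exact (MeasureTheory.ae_map_iff measurable_neg.aemeasurable hΦ).symm

lemma integrable_comp_neg_iff' {g : ℝ → ℝ} :
    Integrable (fun x => g (-x)) volume ↔ Integrable g volume :=
  (Measure.measurePreserving_neg (volume : Measure ℝ)).integrable_comp_emb
    (MeasurableEquiv.neg ℝ).measurableEmbedding

lemma integral_comp_neg' (g : ℝ → ℝ) : ∫ x, g (-x) = ∫ x, g x :=
  (Measure.measurePreserving_neg (volume : Measure ℝ)).integral_comp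
    (MeasurableEquiv.neg ℝ).measurableEmbedding g

lemma integrable_comp_add' {g : ℝ → ℝ} (hg : Integrable g volume) (a : ℝ) :
    Integrable (fun x => g (x + a)) volume :=
  ((measurePreserving_add_right (volume : Measure ℝ) a).integrable_comp_emb
    (MeasurableEquiv.addRight a).measurableEmbedding).2 hg

lemma integrable_comp_sub' {g : ℝ → ℝ} (hg : Integrable g volume) (a : ℝ) :
    Integrable (fun x => g (x - a)) volume := by
  simpa [sub_eq_add_neg] using integrable_comp_add' hg (-a)

lemma integrable_comp_sub_left' {g : ℝ → ℝ} (hg : Integrable g volume) (a : ℝ) :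
    Integrable (fun x => g (a - x)) volume := by
  have h1 : Integrable (fun x => g (x + a)) volume := integrable_comp_add' hg a
  have h2 := integrable_comp_neg_iff'.2 h1
  simpa [neg_add_eq_sub] using h2

/-- transfer along a measure preserving equivalence -/
lemma mOf_comp_equiv (f : ℝ → ℝ) (e : ℝ ≃ᵐ ℝ) (he : (volume : Measure ℝ).map e = volume) :
    mOf (fun x => f (e x)) = (mOf f).map e.symm := by
  have he' : (volume : Measure ℝ).map e.symm = volume := by
    conv_lhs => rw [← he]
    rw [Measure.map_map e.symm.measurable e.measurable]
    have : (⇑e.symm ∘ ⇑e) = id := by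
      funext x; simp
    rw [this, Measure.map_id]
  ext s hs
  rw [Measure.map_apply e.symm.measurable hs, mOf, mOf, withDensity_apply _ hs,
    withDensity_apply _ (e.symm.measurable hs)]
  have hres : (volume : Measure ℝ).restrict s
      = ((volume : Measure ℝ).restrict (⇑e.symm ⁻¹' s)).map e.symm := by
    rw [← Measure.restrict_map e.symm.measurable hs, he']
  rw [hres, lintegral_map_equiv]
  exact lintegral_congr fun a => by rw [e.apply_symm_apply]

lemma mOf_shift (f : ℝ → ℝ) (a : ℝ) :
    shiftMeasure a (mOf f) = mOf (fun x => f (x - a)) := by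
  have hmap : (volume : Measure ℝ).map (MeasurableEquiv.addRight (-a)) = volume := by
    have h := map_add_right_eq_self (volume : Measure ℝ) (-a)
    rw [show ⇑(MeasurableEquiv.addRight (-a)) = fun x => x + -a from rfl]
    exact h
  have h1 : mOf (fun x => f ((MeasurableEquiv.addRight (-a)) x))
      = (mOf f).map (MeasurableEquiv.addRight (-a)).symm :=
    mOf_comp_equiv f _ hmap
  have h2 : (fun x => f ((MeasurableEquiv.addRight (-a)) x)) = fun x => f (x - a) := by
    funext x
    simp [sub_eq_add_neg]
  have h3 : ⇑(MeasurableEquiv.addRight (-a)).symm = fun x : ℝ => x + a := by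
    rw [MeasurableEquiv.symm_addRight]
    funext x
    simp
  rw [h2] at h1
  rw [shiftMeasure, h1, h3]

lemma mOf_mix {p₁ p₂ : ℝ → ℝ} (h₁ : Measurable p₁) (h₂ : Measurable p₂)
    (hp₁ : ∀ x, 0 ≤ p₁ x) (hp₂ : ∀ x, 0 ≤ p₂ x) :
    mOf (fun x => (p₁ x + p₂ x) / 2) = (2⁻¹ : ℝ≥0∞) • (mOf p₁ + mOf p₂) := by
  have hfun : (fun x => ENNReal.ofReal ((p₁ x + p₂ x) / 2))
      = (2⁻¹ : ℝ≥0∞) • ((fun x => ENNReal.ofReal (p₁ x)) + fun x => ENNReal.ofReal (p₂ x)) := by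
    funext x
    simp only [Pi.smul_apply, Pi.add_apply, smul_eq_mul]
    rw [ENNReal.ofReal_div_of_pos two_pos, ENNReal.ofReal_add (hp₁ x) (hp₂ x),
      ENNReal.div_eq_inv_mul]
    norm_num
  have hFG : Measurable ((fun x => ENNReal.ofReal (p₁ x)) + fun x => ENNReal.ofReal (p₂ x)) :=
    h₁.ennreal_ofReal.add h₂.ennreal_ofReal
  rw [mOf, hfun, withDensity_smul _ hFG, withDensity_add_left h₁.ennreal_ofReal]
  rfl

lemma mOf_ac_iff {p r : ℝ → ℝ} (hp : Measurable p) (hr : Measurable r)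
    (hp0 : ∀ x, 0 ≤ p x) (hr0 : ∀ x, 0 ≤ r x) :
    mOf p ≪ mOf r ↔ ∀ᵐ x, r x = 0 → p x = 0 := by
  constructor
  · intro hac
    have hS : MeasurableSet {x | r x = 0} := hr (measurableSet_singleton 0)
    have hrS : mOf r {x | r x = 0} = 0 := by
      rw [mOf, withDensity_apply _ hS]
      rw [setLIntegral_eq_zero_iff hS hr.ennreal_ofReal]
      exact ae_of_all _ fun x hx => by simp only [mem_setOf_eq] at hx; simp [hx]
    have hpS := hac hrS
    rw [mOf, withDensity_apply _ hS, setLIntegral_eq_zero_iff hS hp.ennreal_ofReal] at hpS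
    filter_upwards [hpS] with x hx hrx
    have := hx hrx
    simp only [ENNReal.ofReal_eq_zero] at this
    exact le_antisymm this (hp0 x)
  · intro hae
    refine Measure.AbsolutelyContinuous.mk fun s hs h0 => ?_
    rw [mOf, withDensity_apply _ hs, setLIntegral_eq_zero_iff hs hr.ennreal_ofReal] at h0
    rw [mOf, withDensity_apply _ hs, setLIntegral_eq_zero_iff hs hp.ennreal_ofReal]
    filter_upwards [h0, hae] with x h1 h2 hxs
    have hrx : r x = 0 :=
      le_antisymm (by simpa [ENNReal.ofReal_eq_zero] using h1 hxs) (hr0 x)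
    simp [h2 hrx]

lemma llr_mOf {p r : ℝ → ℝ} (hp : Measurable p) (hr : Measurable r)
    (hp0 : ∀ x, 0 ≤ p x) (hr0 : ∀ x, 0 ≤ r x) (hac : mOf p ≪ mOf r) :
    llr (mOf p) (mOf r) =ᵐ[mOf p] fun x => Real.log (p x / r x) := by
  haveI hν : SigmaFinite (mOf r) := by
    rw [mOf]
    exact SigmaFinite.withDensity_of_ne_top (ae_of_all _ fun x => ENNReal.ofReal_ne_top)
  set h : ℝ → ℝ≥0∞ := fun x => ENNReal.ofReal (p x) / ENNReal.ofReal (r x) with hh_def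
  have hh : Measurable h := hp.ennreal_ofReal.div hr.ennreal_ofReal
  have hae : ∀ᵐ x, r x = 0 → p x = 0 := (mOf_ac_iff hp hr hp0 hr0).1 hac
  have key : mOf p = (mOf r).withDensity h := by
    rw [mOf, mOf, ← withDensity_mul _ hr.ennreal_ofReal hh]
    apply withDensity_congr_ae
    filter_upwards [hae] with x hx
    by_cases h0 : r x = 0
    · simp [hh_def, h0, hx h0]
    · have hrx : (0:ℝ) < r x := (hr0 x).lt_of_ne (Ne.symm h0)
      simp only [Pi.mul_apply, hh_def]
      rw [mul_comm, ENNReal.div_mul_cancel (by simp [hrx]) ENNReal.ofReal_ne_top]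
  have hrnd : (mOf p).rnDeriv (mOf r) =ᵐ[mOf r] h := by
    rw [key]
    exact Measure.rnDeriv_withDensity (mOf r) hh
  have haer : llr (mOf p) (mOf r) =ᵐ[mOf r] fun x => Real.log (p x / r x) := by
    filter_upwards [hrnd] with x hx
    rw [llr_def]
    simp only
    rw [hx]
    by_cases h0 : r x = 0
    · by_cases h0p : p x = 0
      · simp [hh_def, h0, h0p]
      · have : ENNReal.ofReal (p x) ≠ 0 := by
          simp only [ne_eq, ENNReal.ofReal_eq_zero, not_le]
          exact (hp0 x).lt_of_ne (Ne.symm h0p)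
        simp [hh_def, h0, ENNReal.div_zero this]
    · have hrx : (0:ℝ) < r x := (hr0 x).lt_of_ne (Ne.symm h0)
      have : h x = ENNReal.ofReal (p x / r x) := (ENNReal.ofReal_div_of_pos (x := p x) hrx).symm
      rw [this, ENNReal.toReal_ofReal (div_nonneg (hp0 x) (hr0 x))]
  exact hac.ae_eq haer

lemma integrable_mOf_iff {p : ℝ → ℝ} (hp : Measurable p) (hp0 : ∀ x, 0 ≤ p x) (F : ℝ → ℝ) :
    Integrable F (mOf p) ↔ Integrable (fun x => F x * p x) volume := by
  rw [mOf,
    show (fun x => ENNReal.ofReal (p x)) = fun x => ((Real.toNNReal (p x) : ℝ≥0) : ℝ≥0∞) from rfl,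
    integrable_withDensity_iff_integrable_coe_smul hp.real_toNNReal]
  constructor
  · intro hI
    refine hI.congr (ae_of_all _ fun x => ?_)
    simp [Real.coe_toNNReal _ (hp0 x), mul_comm]
  · intro hI
    refine hI.congr (ae_of_all _ fun x => ?_)
    simp [Real.coe_toNNReal _ (hp0 x), mul_comm]

lemma integral_mOf {p : ℝ → ℝ} (hp : Measurable p) (hp0 : ∀ x, 0 ≤ p x) (F : ℝ → ℝ) :
    ∫ x, F x ∂(mOf p) = ∫ x, F x * p x := by
  rw [mOf,
    show (fun x => ENNReal.ofReal (p x)) = fun x => ((Real.toNNReal (p x) : ℝ≥0) : ℝ≥0∞) from rfl,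
    integral_withDensity_eq_integral_smul hp.real_toNNReal F]
  refine integral_congr_ae (ae_of_all _ fun x => ?_)
  simp [NNReal.smul_def, Real.coe_toNNReal _ (hp0 x), mul_comm]

/-- The conditions under which `KLdiv (mOf p) (mOf r)` is finite, expressed via densities. -/
def KLcond (p r : ℝ → ℝ) : Prop :=
  (∀ᵐ x, r x = 0 → p x = 0) ∧ Integrable (fun x => Real.log (p x / r x) * p x) volume

lemma KLdiv_mOf {p r : ℝ → ℝ} (hp : Measurable p) (hr : Measurable r)
    (hp0 : ∀ x, 0 ≤ p x) (hr0 : ∀ x, 0 ≤ r x) :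
    KLdiv (mOf p) (mOf r)
      = if KLcond p r then ENNReal.ofReal (∫ x, Real.log (p x / r x) * p x) else ⊤ := by
  by_cases hD : KLcond p r
  · have hac := (mOf_ac_iff hp hr hp0 hr0).2 hD.1
    have hllr := llr_mOf hp hr hp0 hr0 hac
    have hint : Integrable (llr (mOf p) (mOf r)) (mOf p) :=
      ((integrable_mOf_iff hp hp0 _).2 hD.2).congr hllr.symm
    rw [KLdiv, if_pos ⟨hac, hint⟩, if_pos hD, integral_congr_ae hllr, integral_mOf hp hp0]
  · rw [KLdiv, if_neg, if_neg hD]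
    rintro ⟨hac, hint⟩
    exact hD ⟨(mOf_ac_iff hp hr hp0 hr0).1 hac,
      (integrable_mOf_iff hp hp0 _).1 (hint.congr (llr_mOf hp hr hp0 hr0 hac))⟩

/-! ### Convexity of the KL divergence under symmetric mixtures -/

lemma KLcond_mix {p₁ p₂ r₁ r₂ : ℝ → ℝ}
    (hmp₁ : Measurable p₁) (hmp₂ : Measurable p₂) (hmr₁ : Measurable r₁) (hmr₂ : Measurable r₂)
    (hp₁ : ∀ x, 0 ≤ p₁ x) (hp₂ : ∀ x, 0 ≤ p₂ x) (hr₁ : ∀ x, 0 ≤ r₁ x) (hr₂ : ∀ x, 0 ≤ r₂ x)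
    (hir₁ : Integrable r₁ volume) (hir₂ : Integrable r₂ volume)
    (h₁ : KLcond p₁ r₁) (h₂ : KLcond p₂ r₂) :
    KLcond (fun x => (p₁ x + p₂ x) / 2) (fun x => (r₁ x + r₂ x) / 2) ∧
      (∫ x, Real.log ((p₁ x + p₂ x) / 2 / ((r₁ x + r₂ x) / 2)) * ((p₁ x + p₂ x) / 2))
        ≤ max (∫ x, Real.log (p₁ x / r₁ x) * p₁ x) (∫ x, Real.log (p₂ x / r₂ x) * p₂ x) := by
  obtain ⟨hae₁, hint₁⟩ := h₁
  obtain ⟨hae₂, hint₂⟩ := h₂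
  set φ : ℝ → ℝ :=
    fun x => Real.log ((p₁ x + p₂ x) / 2 / ((r₁ x + r₂ x) / 2)) * ((p₁ x + p₂ x) / 2) with hφ
  set g : ℝ → ℝ :=
    fun x => (Real.log (p₁ x / r₁ x) * p₁ x + Real.log (p₂ x / r₂ x) * p₂ x) / 2 with hg
  have hub : ∀ᵐ x, φ x ≤ g x := by
    filter_upwards [hae₁, hae₂] with x h1 h2
    exact logsum (hp₁ x) (hp₂ x) (hr₁ x) (hr₂ x) h1 h2
  have hmix : ∀ᵐ x, (r₁ x + r₂ x) / 2 = 0 → (p₁ x + p₂ x) / 2 = 0 := by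
    filter_upwards [hae₁, hae₂] with x h1 h2 hrs
    have hs1 := hr₁ x
    have hs2 := hr₂ x
    have e1 : r₁ x = 0 := by linarith
    have e2 : r₂ x = 0 := by linarith
    rw [h1 e1, h2 e2]
    norm_num
  have hlb : ∀ᵐ x, -((r₁ x + r₂ x) / 2) ≤ φ x := by
    filter_upwards [hmix] with x hx
    exact log_mul_lb (div_nonneg (add_nonneg (hp₁ x) (hp₂ x)) two_pos.le)
      (div_nonneg (add_nonneg (hr₁ x) (hr₂ x)) two_pos.le) hx
  have hgi : Integrable g volume := (hint₁.add hint₂).div_const 2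
  have hrmi : Integrable (fun x => (r₁ x + r₂ x) / 2) volume := (hir₁.add hir₂).div_const 2
  have hφm : Measurable φ := by
    apply Measurable.mul
    · exact (((hmp₁.add hmp₂).div_const 2).div ((hmr₁.add hmr₂).div_const 2)).log
    · exact (hmp₁.add hmp₂).div_const 2
  have hφi : Integrable φ volume := by
    have hbound : Integrable (fun x => |g x| + (r₁ x + r₂ x) / 2) volume := hgi.abs.add hrmi
    refine Integrable.mono' hbound hφm.aestronglyMeasurable ?_
    filter_upwards [hub, hlb] with x h1 h2
    rw [Real.norm_eq_abs, abs_le]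
    have hr0 : (0:ℝ) ≤ (r₁ x + r₂ x) / 2 :=
      div_nonneg (add_nonneg (hr₁ x) (hr₂ x)) two_pos.le
    have hga := abs_nonneg (g x)
    have hgb := le_abs_self (g x)
    constructor <;> linarith
  refine ⟨⟨hmix, hφi⟩, ?_⟩
  have step1 : (∫ x, φ x) ≤ ∫ x, g x := integral_mono_ae hφi hgi hub
  have step2 : (∫ x, g x)
      = ((∫ x, Real.log (p₁ x / r₁ x) * p₁ x) + ∫ x, Real.log (p₂ x / r₂ x) * p₂ x) / 2 := by
    rw [hg]
    rw [integral_div, integral_add hint₁ hint₂]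
  rcases max_cases (∫ x, Real.log (p₁ x / r₁ x) * p₁ x) (∫ x, Real.log (p₂ x / r₂ x) * p₂ x)
    with ⟨hm, hle⟩ | ⟨hm, hle⟩ <;> rw [hm] <;> linarith

/-! ### Main theorem -/

/-- Symmetrization does not change the cost and does not increase the maximal KL-divergence. -/
theorem symmetrization_improves (c : ℝ → ℝ) (hc0 : ∀ x, 0 ≤ c x) (hce : ∀ x, c (-x) = c x)
    (q : ℝ → ℝ) (hqm : Measurable q) (hq0 : ∀ x, 0 ≤ q x) (hq1 : ∫ x, q x = 1)
    (s : ℝ) (hs : 0 < s) :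
    (∫⁻ x, ENNReal.ofReal (c x * ((q x + q (-x)) / 2))) = (∫⁻ x, ENNReal.ofReal (c x * q x)) ∧
    (⨆ (a : ℝ) (_ : |a| ≤ s),
        KLdiv (mOf fun x => (q x + q (-x)) / 2)
          (shiftMeasure a (mOf fun x => (q x + q (-x)) / 2))) ≤
      ⨆ (a : ℝ) (_ : |a| ≤ s), KLdiv (mOf q) (shiftMeasure a (mOf q)) := by
  have hqnm : Measurable fun x : ℝ => q (-x) := hqm.comp measurable_neg
  have hqn0 : ∀ x : ℝ, 0 ≤ q (-x) := fun x => hq0 (-x)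
  have hmixm : Measurable fun x : ℝ => (q x + q (-x)) / 2 := (hqm.add hqnm).div_const 2
  have hmix0 : ∀ x : ℝ, 0 ≤ (q x + q (-x)) / 2 :=
    fun x => div_nonneg (add_nonneg (hq0 x) (hq0 (-x))) two_pos.le
  -- the cost transfer lemma
  have lint_c : ∀ f : ℝ → ℝ, Measurable f → (∀ x, 0 ≤ f x) →
      (∫⁻ x, ENNReal.ofReal (c x * f x)) = ∫⁻ x, ENNReal.ofReal (c x) ∂(mOf f) := by
    intro f hf hf0
    rw [mOf, lintegral_withDensity_eq_lintegral_mul_non_measurable _ hf.ennreal_ofReal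
      (ae_of_all _ fun x => ENNReal.ofReal_lt_top) (fun x => ENNReal.ofReal (c x))]
    refine lintegral_congr fun x => ?_
    simp only [Pi.mul_apply]
    rw [← ENNReal.ofReal_mul (hf0 x), mul_comm]
  constructor
  · -- the cost part
    have hmapmix := mOf_mix hqm hqnm hq0 hqn0
    rw [lint_c _ hmixm hmix0, lint_c _ hqm hq0, hmapmix, lintegral_smul_measure,
      lintegral_add_measure]
    have hneg : (∫⁻ x, ENNReal.ofReal (c x) ∂(mOf fun x => q (-x)))
        = ∫⁻ x, ENNReal.ofReal (c x) ∂(mOf q) := by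
      rw [← lint_c _ hqnm hqn0, ← lint_c _ hqm hq0]
      have : (fun x => ENNReal.ofReal (c x * q (-x)))
          = fun x => ENNReal.ofReal (c (-x) * q (-x)) := by
        funext x; rw [hce]
      rw [this]
      exact lintegral_comp_neg' fun y => ENNReal.ofReal (c y * q y)
    rw [hneg, ← two_mul, smul_eq_mul, ← mul_assoc,
      ENNReal.inv_mul_cancel two_ne_zero ENNReal.ofNat_ne_top,
      one_mul]
  · -- the KL part
    have hqi : Integrable q volume := by
      by_contra hnot
      rw [integral_undef hnot] at hq1
      norm_num at hq1
    refine iSup_le fun a => iSup_le fun ha => ?_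
    have hmra : Measurable fun x : ℝ => q (x - a) := hqm.comp (measurable_id.sub_const a)
    have hmraa : Measurable fun x : ℝ => q (x + a) := hqm.comp (measurable_id.add_const a)
    have hmrsl : Measurable fun x : ℝ => q (a - x) := hqm.comp (measurable_const.sub measurable_id)
    have hRHS_ge : ∀ b : ℝ, |b| ≤ s → KLdiv (mOf q) (shiftMeasure b (mOf q))
        ≤ ⨆ (a : ℝ) (_ : |a| ≤ s), KLdiv (mOf q) (shiftMeasure a (mOf q)) := fun b hb =>
      le_iSup₂ (f := fun (a : ℝ) (_ : |a| ≤ s) => KLdiv (mOf q) (shiftMeasure a (mOf q))) b hb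
    have hKa : KLdiv (mOf q) (shiftMeasure a (mOf q))
        = if KLcond q (fun x => q (x - a)) then
            ENNReal.ofReal (∫ x, Real.log (q x / q (x - a)) * q x) else ⊤ := by
      rw [mOf_shift, KLdiv_mOf hqm hmra hq0 fun x => hq0 _]
    have hKna : KLdiv (mOf q) (shiftMeasure (-a) (mOf q))
        = if KLcond q (fun x => q (x + a)) then
            ENNReal.ofReal (∫ x, Real.log (q x / q (x + a)) * q x) else ⊤ := by
      rw [mOf_shift]
      have he : (fun x => q (x - -a)) = fun x => q (x + a) := by
        funext x; rw [sub_neg_eq_add]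
      rw [mOf_congr he, KLdiv_mOf hqm hmraa hq0 fun x => hq0 _]
    by_cases hc₁ : KLcond q fun x => q (x - a)
    · by_cases hc₂ : KLcond q fun x => q (x + a)
      · -- both finite: use convexity
        have hc₂' : KLcond (fun x => q (-x)) fun x => q (a - x) := by
          obtain ⟨hae, hint⟩ := hc₂
          constructor
          · have hmeasS : MeasurableSet {x : ℝ | q (x + a) = 0 → q x = 0} := by
              have hset : {x : ℝ | q (x + a) = 0 → q x = 0}
                  = {x : ℝ | q (x + a) = 0}ᶜ ∪ {x : ℝ | q x = 0} := by
                ext x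
                simp [imp_iff_not_or]
              rw [hset]
              exact ((hmraa (measurableSet_singleton 0)).compl).union
                (hqm (measurableSet_singleton 0))
            have hx := (ae_comp_neg' (Φ := fun x => q (x + a) = 0 → q x = 0) hmeasS).2 hae
            filter_upwards [hx] with x hx h0
            exact hx (by rw [neg_add_eq_sub]; exact h0)
          · have hI : Integrable (fun x => Real.log (q (-x) / q (-x + a)) * q (-x)) volume :=
              integrable_comp_neg_iff'.2 hint
            refine hI.congr (ae_of_all _ fun x => ?_)
            simp only [neg_add_eq_sub]
        have hI₂' : (∫ x, Real.log (q (-x) / q (a - x)) * q (-x))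
            = ∫ x, Real.log (q x / q (x + a)) * q x := by
          have he : (fun x => Real.log (q (-x) / q (a - x)) * q (-x))
              = fun x => Real.log (q (-x) / q (-x + a)) * q (-x) := by
            funext x; rw [neg_add_eq_sub]
          rw [he]
          exact integral_comp_neg' fun y => Real.log (q y / q (y + a)) * q y
        have hmix := KLcond_mix hqm hqnm hmra hmrsl hq0 hqn0 (fun x => hq0 _) (fun x => hq0 _)
          (integrable_comp_sub' hqi a) (integrable_comp_sub_left' hqi a) hc₁ hc₂'
        have hle : (∫ x, Real.log ((q x + q (-x)) / 2 / ((q (x - a) + q (a - x)) / 2))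
              * ((q x + q (-x)) / 2))
            ≤ max (∫ x, Real.log (q x / q (x - a)) * q x)
              (∫ x, Real.log (q x / q (x + a)) * q x) := by
          have h := hmix.2
          rwa [hI₂'] at h
        have hKa' : KLdiv (mOf q) (shiftMeasure a (mOf q))
            = ENNReal.ofReal (∫ x, Real.log (q x / q (x - a)) * q x) := by
          rw [hKa, if_pos hc₁]
        have hKna' : KLdiv (mOf q) (shiftMeasure (-a) (mOf q))
            = ENNReal.ofReal (∫ x, Real.log (q x / q (x + a)) * q x) := by
          rw [hKna, if_pos hc₂]
        have hgoal_eq : KLdiv (mOf fun x => (q x + q (-x)) / 2)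
              (shiftMeasure a (mOf fun x => (q x + q (-x)) / 2))
            = ENNReal.ofReal (∫ x, Real.log ((q x + q (-x)) / 2 / ((q (x - a) + q (a - x)) / 2))
              * ((q x + q (-x)) / 2)) := by
          rw [mOf_shift]
          have he : (fun x => (q (x - a) + q (-(x - a))) / 2)
              = fun x => (q (x - a) + q (a - x)) / 2 := by
            funext x; rw [neg_sub]
          rw [mOf_congr he,
            KLdiv_mOf (r := fun x => (q (x - a) + q (a - x)) / 2) hmixm
              ((hmra.add hmrsl).div_const 2) hmix0
              (fun x => div_nonneg (add_nonneg (hq0 _) (hq0 _)) two_pos.le),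
            if_pos hmix.1]
        rw [hgoal_eq]
        rcases max_cases (∫ x, Real.log (q x / q (x - a)) * q x)
            (∫ x, Real.log (q x / q (x + a)) * q x) with ⟨hm, _⟩ | ⟨hm, _⟩ <;> rw [hm] at hle
        · exact le_trans (ENNReal.ofReal_le_ofReal hle)
            (le_trans (le_of_eq hKa'.symm) (hRHS_ge a ha))
        · exact le_trans (ENNReal.ofReal_le_ofReal hle)
            (le_trans (le_of_eq hKna'.symm) (hRHS_ge (-a) (by rwa [abs_neg])))
      · -- K(-a) = ⊤
        have htop : KLdiv (mOf q) (shiftMeasure (-a) (mOf q)) = ⊤ := by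
          rw [hKna, if_neg hc₂]
        refine le_trans le_top ?_
        rw [← htop]
        exact hRHS_ge (-a) (by rwa [abs_neg])
    · -- K a = ⊤
      have htop : KLdiv (mOf q) (shiftMeasure a (mOf q)) = ⊤ := by
        rw [hKa, if_neg hc₁]
      refine le_trans le_top ?_
      rw [← htop]
      exact hRHS_ge a ha

end
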